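/- The inverse limit G = lim←(Ω'_n, φ'_n) is a group under the componentwise operation (g_n)_n · (h_n)_n = ((g_n h_n)')_n, and the set 𝒢 of locally eventually constant sequences is a subgroup of G. -/

import Mathlib

open Classical
noncomputable section

namespace GCG

/-- One-step backtrack reduction of a word: replace some substring `u v u` by `u`. -/
def ReduceStep {V : Type*} (l r : List V) : Prop :=
  ∃ (p s : List V) (u v : V), l = p ++ [u, v, u] ++ s ∧ r = p ++ [u] ++ s

/-- A word is reduced if it admits no one-step reduction. -/
def IsReduced {V : Type*} (l : List V) : Prop := ∀ r, ¬ ReduceStep l r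

/-- The reduction `ω'` of a word: the (for words in a simple graph, unique) reduced
word obtained from it by repeatedly replacing substrings `u v u` by `u`. -/
def reduce {V : Type*} (l : List V) : List V :=
  if h : ∃ r, Relation.ReflTransGen ReduceStep l r ∧ IsReduced r then h.choose else l

/-- Compress every maximal constant substring `u u ⋯ u` to the single letter `u`. -/
def compress {V : Type*} : List V → List V
  | [] => []
  | [a] => [a]
  | a :: b :: t => if a = b then compress (b :: t) else a :: compress (b :: t)

/-- Delete–Replace–Compress along `f`: delete the letters sent into `S`
(the subdivision points), replace the remaining letters by their images,
and compress maximal constant substrings. -/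
def DRC {V' V S : Type*} (f : V' → V ⊕ S) (w : List V') : List V :=
  compress (w.filterMap fun v => (f v).getLeft?)

/-- A word in a simple graph: a finite list of vertices in which consecutive
letters are distinct and joined by an edge. -/
def IsWord {V : Type*} (G : SimpleGraph V) (l : List V) : Prop := l.Chain' G.Adj

/-- A loop word at `x`: a word that starts and ends with `x`. -/
def IsLoopWord {V : Type*} (G : SimpleGraph V) (x : V) (l : List V) : Prop :=
  l.Chain' G.Adj ∧ l.head? = some x ∧ l.getLast? = some x

/-- Concatenation of loop words: the duplicated base letter is dropped. -/
def lconcat {V : Type*} (ω ξ : List V) : List V := ω.dropLast ++ ξ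

/-- `Gs` (on vertex set `V ⊕ S`) is the subdivision of `G` in which every edge is
evenly subdivided into `d` edges: every edge of `G` is replaced by a path of
length `d` through fresh interior vertices from `S`, these paths are compatible
with edge reversal, their interiors are pairwise disjoint, they exhaust `S`, and
their steps are exactly the edges of `Gs`. -/
def IsEvenSubdivision {V S : Type*} (G : SimpleGraph V) (d : ℕ)
    (Gs : SimpleGraph (V ⊕ S)) : Prop :=
  ∃ P : G.Dart → Fin (d + 1) → V ⊕ S,
    (∀ e, P e 0 = Sum.inl e.toProd.1) ∧
    (∀ e, P e (Fin.last d) = Sum.inl e.toProd.2) ∧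
    (∀ e (i : Fin (d + 1)), 0 < i.val → i.val < d → ∃ s : S, P e i = Sum.inr s) ∧
    (∀ e, Function.Injective (P e)) ∧
    (∀ e (i : Fin (d + 1)), P e.symm i = P e i.rev) ∧
    (∀ s : S, ∃ e i, P e i = Sum.inr s) ∧
    (∀ e e' (i i' : Fin (d + 1)), 0 < i.val → i.val < d → P e i = P e' i' →
      (e' = e ∧ i' = i) ∨ (e' = e.symm ∧ i' = i.rev)) ∧
    (∀ a b, Gs.Adj a b ↔ ∃ e, ∃ i : Fin d, P e i.castSucc = a ∧ P e i.succ = b)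

/-- The inverse sequence of finite connected simple graphs `X_n` with even
subdivisions `X*_n` and simplicial bonding surjections `f_n : X_{n+1} → X*_n`
mapping every edge onto an edge, together with coherent base vertices `x_n`. -/
structure GraphTower where
  V : ℕ → Type
  S : ℕ → Type
  finV : ∀ n, Finite (V n)
  G : ∀ n, SimpleGraph (V n)
  conn : ∀ n, (G n).Connected
  d : ℕ → ℕ
  two_le_d : ∀ n, 2 ≤ d n
  Gs : ∀ n, SimpleGraph (V n ⊕ S n)
  subdiv : ∀ n, IsEvenSubdivision (G n) (d n) (Gs n)
  f : ∀ n, V (n + 1) → V n ⊕ S n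
  f_surj : ∀ n, Function.Surjective (f n)
  f_simplicial : ∀ n ⦃u v⦄, (G (n + 1)).Adj u v → (Gs n).Adj (f n u) (f n v)
  f_edge_surj : ∀ n ⦃a b⦄, (Gs n).Adj a b →
    ∃ u v, (G (n + 1)).Adj u v ∧ f n u = a ∧ f n v = b
  x : ∀ n, V n
  f_base : ∀ n, f n (x (n + 1)) = Sum.inl (x n)

namespace GraphTower

/-- The projection `φ_n = DRC_n`. -/
def phi (T : GraphTower) (n : ℕ) : List (T.V (n + 1)) → List (T.V n) := DRC (T.f n)

/-- The composite projection `φ_n ∘ φ_{n+1} ∘ ⋯ ∘ φ_{n+m-1}` (the identity for `m = 0`). -/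
def proj (T : GraphTower) (n : ℕ) : (m : ℕ) → List (T.V (n + m)) → List (T.V n)
  | 0, w => w
  | m + 1, w => T.proj n m (T.phi (n + m) w)

/-- Membership in `Ω = lim←(Ω_n, φ_n)`: a coherent sequence of loop words. -/
def MemOmega (T : GraphTower) (ω : ∀ n, List (T.V n)) : Prop :=
  (∀ n, IsLoopWord (T.G n) (T.x n) (ω n)) ∧ ∀ n, T.phi n (ω (n + 1)) = ω n

/-- Membership in `G = lim←(Ω'_n, φ'_n)`: a `φ'`-coherent sequence of reduced loop words. -/
def MemG (T : GraphTower) (g : ∀ n, List (T.V n)) : Prop :=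
  (∀ n, IsLoopWord (T.G n) (T.x n) (g n) ∧ IsReduced (g n)) ∧
    ∀ n, reduce (T.phi n (g (n + 1))) = g n

/-- A sequence is locally eventually constant if for every fixed level `n` the
unreduced projections of its later terms to level `n` are eventually constant. -/
def LEC (T : GraphTower) (g : ∀ n, List (T.V n)) : Prop :=
  ∀ n, ∃ M, ∀ m, M ≤ m → T.proj n m (g (n + m)) = T.proj n M (g (n + M))

/-- `ω` is the stabilization `←g` of `g`: for every level `n`, the projections of
the later terms of `g` to level `n` eventually equal `ω n`. -/
def IsStabilization (T : GraphTower) (g ω : ∀ n, List (T.V n)) : Prop :=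
  ∀ n, ∃ M, ∀ m, M ≤ m → T.proj n m (g (n + m)) = ω n

/-- The identity word sequence `(x_n)_n`. -/
def seqOne (T : GraphTower) : ∀ n, List (T.V n) := fun n => [T.x n]

/-- Termwise concatenation followed by termwise reduction. -/
def seqMul (T : GraphTower) (g h : ∀ n, List (T.V n)) : ∀ n, List (T.V n) :=
  fun n => reduce (lconcat (g n) (h n))

/-- Termwise reversal. -/
def seqInv (T : GraphTower) (g : ∀ n, List (T.V n)) : ∀ n, List (T.V n) :=
  fun n => (g n).reverse

/-- Membership in `←𝒢`: the stabilization of some locally eventually constant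
element of `G`. -/
def MemSG (T : GraphTower) (ω : ∀ n, List (T.V n)) : Prop :=
  ∃ g, T.MemG g ∧ T.LEC g ∧ T.IsStabilization g ω

/-- `τ = ω ∗ ξ`: termwise concatenation, followed by termwise reduction,
followed by stabilization. -/
def star (T : GraphTower) (ω ξ τ : ∀ n, List (T.V n)) : Prop :=
  T.IsStabilization (fun n => reduce (lconcat (ω n) (ξ n))) τ

end GraphTower

end GCG

namespace GCG

section Rewrite

variable {V : Type*}

open Relation

theorem ReduceStep.length_eq {l r : List V} (h : ReduceStep l r) : l.length = r.length + 2 := by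
  obtain ⟨p, s, u, v, rfl, rfl⟩ := h; simp; omega

theorem IsReduced.rtg_eq {l r : List V} (h : IsReduced l)
    (hr : Relation.ReflTransGen ReduceStep l r) : l = r := by
  rcases hr.cases_head with rfl | ⟨c, hc, _⟩
  · rfl
  · exact absurd hc (h c)

theorem exists_normalForm (l : List V) :
    ∃ r, Relation.ReflTransGen ReduceStep l r ∧ IsReduced r := by
  suffices H : ∀ (n : ℕ) (l : List V), l.length ≤ n →
      ∃ r, Relation.ReflTransGen ReduceStep l r ∧ IsReduced r from H l.length l le_rfl
  intro n
  induction n using Nat.strong_induction_on with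
  | _ n ih =>
    intro l hl
    by_cases h : IsReduced l
    · exact ⟨l, .refl, h⟩
    · simp only [IsReduced, not_forall, not_not] at h
      obtain ⟨m, hm⟩ := h
      have hlen := hm.length_eq
      obtain ⟨r, hr, hred⟩ := ih m.length (by omega) m le_rfl
      exact ⟨r, .head hm hr, hred⟩

theorem ReduceStep.cons {l r : List V} (a : V) (h : ReduceStep l r) :
    ReduceStep (a :: l) (a :: r) := by
  obtain ⟨p, s, u, v, rfl, rfl⟩ := h
  exact ⟨a :: p, s, u, v, rfl, rfl⟩

theorem locConf_aux : ∀ (p1 p2 s1 s2 : List V) (u1 v1 u2 v2 : V),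
    p1.length ≤ p2.length →
    p1 ++ [u1, v1, u1] ++ s1 = p2 ++ [u2, v2, u2] ++ s2 →
    p1 ++ [u1] ++ s1 = p2 ++ [u2] ++ s2 ∨
      ∃ d, ReduceStep (p1 ++ [u1] ++ s1) d ∧ ReduceStep (p2 ++ [u2] ++ s2) d := by
  intro p1
  induction p1 with
  | nil =>
    intro p2 s1 s2 u1 v1 u2 v2 _ heq
    match p2 with
    | [] =>
      simp only [List.nil_append, List.cons_append, List.cons.injEq] at heq
      obtain ⟨rfl, rfl, -, rfl⟩ := heq
      exact Or.inl rfl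
    | [a] =>
      simp only [List.nil_append, List.cons_append, List.nil_append, List.cons.injEq] at heq
      obtain ⟨rfl, rfl, rfl, rfl⟩ := heq
      left; rfl
    | [a, b] =>
      simp only [List.nil_append, List.cons_append, List.nil_append, List.cons.injEq] at heq
      obtain ⟨rfl, rfl, rfl, rfl⟩ := heq
      right
      refine ⟨u1 :: s2, ⟨[], s2, u1, v2, by simp, by simp⟩, ⟨[], s2, u1, v1, by simp, by simp⟩⟩
    | a :: b :: c :: q =>
      simp only [List.nil_append, List.cons_append, List.cons.injEq] at heq
      obtain ⟨rfl, rfl, rfl, rfl⟩ := heq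
      right
      refine ⟨u1 :: q ++ [u2] ++ s2, ⟨u1 :: q, s2, u2, v2, by simp, by simp⟩,
        ⟨[], q ++ [u2] ++ s2, u1, v1, by simp, by simp⟩⟩
  | cons a p1' ih =>
    intro p2 s1 s2 u1 v1 u2 v2 hlen heq
    match p2 with
    | [] => simp at hlen
    | a2 :: p2' =>
      simp only [List.cons_append, List.cons.injEq] at heq
      obtain ⟨rfl, heq⟩ := heq
      rcases ih p2' s1 s2 u1 v1 u2 v2 (by simpa using hlen) heq with h | ⟨d, h1, h2⟩
      · left; simp only [List.cons_append, h]
      · exact Or.inr ⟨a :: d, h1.cons a, h2.cons a⟩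

theorem locConf {l b c : List V} (hb : ReduceStep l b) (hc : ReduceStep l c) :
    b = c ∨ ∃ d, ReduceStep b d ∧ ReduceStep c d := by
  obtain ⟨p1, s1, u1, v1, rfl, rfl⟩ := hb
  obtain ⟨p2, s2, u2, v2, heq, rfl⟩ := hc
  rcases le_total p1.length p2.length with hle | hle
  · exact locConf_aux p1 p2 s1 s2 u1 v1 u2 v2 hle heq
  · rcases locConf_aux p2 p1 s2 s1 u2 v2 u1 v1 hle heq.symm with h | ⟨d, h1, h2⟩
    · exact Or.inl h.symm
    · exact Or.inr ⟨d, h2, h1⟩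

theorem confluent {l b c : List V} (hb : Relation.ReflTransGen ReduceStep l b)
    (hc : Relation.ReflTransGen ReduceStep l c) :
    ∃ d, Relation.ReflTransGen ReduceStep b d ∧ Relation.ReflTransGen ReduceStep c d := by
  refine Relation.church_rosser ?_ hb hc
  intro a x y hx hy
  rcases locConf hx hy with rfl | ⟨d, h1, h2⟩
  · exact ⟨x, .refl, .refl⟩
  · exact ⟨d, .single h1, .single h2⟩

theorem reduce_spec (l : List V) :
    Relation.ReflTransGen ReduceStep l (reduce l) ∧ IsReduced (reduce l) := by
  rw [reduce, dif_pos (exists_normalForm l)]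
  exact (exists_normalForm l).choose_spec

theorem rtg_reduce (l : List V) : Relation.ReflTransGen ReduceStep l (reduce l) :=
  (reduce_spec l).1

theorem isReduced_reduce (l : List V) : IsReduced (reduce l) := (reduce_spec l).2

theorem reduce_eq_of {l r : List V} (h : Relation.ReflTransGen ReduceStep l r)
    (hr : IsReduced r) : reduce l = r := by
  obtain ⟨d, h1, h2⟩ := confluent (rtg_reduce l) h
  rw [(isReduced_reduce l).rtg_eq h1, hr.rtg_eq h2]

theorem IsReduced.reduce_eq {l : List V} (h : IsReduced l) : reduce l = l :=
  reduce_eq_of .refl h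

theorem reduce_eq_reduce {l m : List V} (h : Relation.ReflTransGen ReduceStep l m) :
    reduce l = reduce m :=
  reduce_eq_of (h.trans (rtg_reduce m)) (isReduced_reduce m)

theorem ReduceStep.context {l r : List V} (p s : List V) (h : ReduceStep l r) :
    ReduceStep (p ++ l ++ s) (p ++ r ++ s) := by
  obtain ⟨p', s', u, v, rfl, rfl⟩ := h
  exact ⟨p ++ p', s' ++ s, u, v, by simp, by simp⟩

theorem rtg_context {l r : List V} (p s : List V)
    (h : Relation.ReflTransGen ReduceStep l r) :
    Relation.ReflTransGen ReduceStep (p ++ l ++ s) (p ++ r ++ s) := by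
  induction h with
  | refl => exact .refl
  | tail _ h ih => exact ih.tail (h.context p s)

theorem rtg_length_le {l r : List V} (h : Relation.ReflTransGen ReduceStep l r) :
    r.length ≤ l.length := by
  induction h with
  | refl => exact le_rfl
  | tail _ h ih => have := h.length_eq; omega

theorem rtg_eq_of_length {l r : List V} (h : Relation.ReflTransGen ReduceStep l r)
    (hl : l.length = r.length) : l = r := by
  rcases h.cases_head with rfl | ⟨c, hc, hcr⟩
  · rfl
  · have := hc.length_eq; have := rtg_length_le hcr; omega

theorem ReduceStep.chain' {R : V → V → Prop} {l r : List V} (h : ReduceStep l r)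
    (hc : l.IsChain R) : r.IsChain R := by
  obtain ⟨p, s, u, v, rfl, rfl⟩ := h
  rw [List.append_assoc] at hc ⊢
  rw [List.isChain_append] at hc ⊢
  obtain ⟨hp, hm, hb⟩ := hc
  refine ⟨hp, ?_, by simpa using hb⟩
  simp only [List.cons_append, List.isChain_cons_cons, List.singleton_append] at hm ⊢
  exact hm.2.2

theorem ReduceStep.head?_eq {l r : List V} (h : ReduceStep l r) : l.head? = r.head? := by
  obtain ⟨p, s, u, v, rfl, rfl⟩ := h
  cases p <;> simp

theorem ReduceStep.getLast?_eq {l r : List V} (h : ReduceStep l r) :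
    l.getLast? = r.getLast? := by
  obtain ⟨p, s, u, v, rfl, rfl⟩ := h
  cases s using List.reverseRecOn <;> simp

theorem ReduceStep.loopWord {G : SimpleGraph V} {x : V} {l r : List V}
    (h : ReduceStep l r) (hl : IsLoopWord G x l) : IsLoopWord G x r :=
  ⟨h.chain' hl.1, h.head?_eq ▸ hl.2.1, h.getLast?_eq ▸ hl.2.2⟩

theorem rtg_loopWord {G : SimpleGraph V} {x : V} {l r : List V}
    (h : Relation.ReflTransGen ReduceStep l r) (hl : IsLoopWord G x l) : IsLoopWord G x r := by
  induction h with
  | refl => exact hl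
  | tail _ h ih => exact h.loopWord ih

theorem reduce_loopWord {G : SimpleGraph V} {x : V} {l : List V}
    (hl : IsLoopWord G x l) : IsLoopWord G x (reduce l) :=
  rtg_loopWord (rtg_reduce l) hl

theorem reduce_reverse_comm {l : List V} : True := trivial

end Rewrite
section Compress

variable {V : Type*}

@[simp] theorem compress_nil : compress ([] : List V) = [] := rfl

@[simp] theorem compress_singleton (a : V) : compress [a] = [a] := rfl

theorem compress_cons_cons (a b : V) (t : List V) :
    compress (a :: b :: t) = if a = b then compress (b :: t) else a :: compress (b :: t) := rfl

theorem compress_head? : ∀ l : List V, (compress l).head? = l.head?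
  | [] => rfl
  | [_] => rfl
  | a :: b :: t => by
    rw [compress_cons_cons]
    split
    · next h => rw [compress_head? (b :: t)]; simp [h]
    · simp

theorem compress_cons_exists (x : V) (B : List V) : ∃ t, compress (x :: B) = x :: t := by
  cases hC : compress (x :: B) with
  | nil => have := compress_head? (x :: B); rw [hC] at this; simp at this
  | cons c t =>
    have := compress_head? (x :: B); rw [hC] at this; simp at this
    exact ⟨t, by rw [this]⟩

theorem compress_getLast? : ∀ l : List V, (compress l).getLast? = l.getLast?
  | [] => rfl
  | [_] => rfl
  | a :: b :: t => by
    have ih := compress_getLast? (b :: t)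
    rw [compress_cons_cons]
    split
    · rw [ih]; simp [List.getLast?_cons_cons]
    · obtain ⟨t', ht'⟩ := compress_cons_exists b t
      rw [ht'] at ih ⊢
      rw [List.getLast?_cons_cons, ih, List.getLast?_cons_cons]

theorem compress_append_cons : ∀ (A : List V) (x : V) (B : List V),
    compress (A ++ x :: B) = compress (A ++ [x]) ++ (compress (x :: B)).tail
  | [], x, B => by
    obtain ⟨t, ht⟩ := compress_cons_exists x B
    simp [ht]
  | [a], x, B => by
    obtain ⟨t, ht⟩ := compress_cons_exists x B
    by_cases h : a = x <;> simp [compress_cons_cons, h, ht]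
  | a :: a' :: A'', x, B => by
    have ih := compress_append_cons (a' :: A'') x B
    simp only [List.cons_append] at ih
    by_cases h : a = a'
    · simp only [List.cons_append, compress_cons_cons, if_pos h]
      exact ih
    · simp only [List.cons_append, compress_cons_cons, if_neg h]
      rw [ih]

theorem compress_append_singleton_of_getLast (A : List V) (x : V)
    (h : A.getLast? = some x) : compress (A ++ [x]) = compress A := by
  induction A with
  | nil => simp at h
  | cons a A' ih =>
    match A', h with
    | [], h =>
      simp only [List.getLast?_singleton, Option.some.injEq] at h
      subst h; simp [compress_cons_cons]
    | a' :: A'', h =>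
      rw [List.getLast?_cons_cons] at h
      have ih' := ih h
      simp only [List.cons_append] at ih'
      by_cases hh : a = a'
      · simp only [List.cons_append, compress_cons_cons, if_pos hh]; exact ih'
      · simp only [List.cons_append, compress_cons_cons, if_neg hh]; rw [ih']

theorem compress_append_singleton_of_ne (A : List V) (x : V)
    (h : A.getLast? ≠ some x) : compress (A ++ [x]) = compress A ++ [x] := by
  induction A with
  | nil => simp
  | cons a A' ih =>
    match A', h with
    | [], h =>
      simp only [List.getLast?_singleton, ne_eq, Option.some.injEq] at h
      simp [compress_cons_cons, h]
    | a' :: A'', h =>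
      rw [List.getLast?_cons_cons] at h
      have ih' := ih h
      simp only [List.cons_append] at ih'
      by_cases hh : a = a'
      · simp only [List.cons_append, compress_cons_cons, if_pos hh]; exact ih'
      · simp only [List.cons_append, compress_cons_cons, if_neg hh]
        rw [ih']

theorem compress_append_dup (A : List V) (a : V) (B : List V)
    (h : A.getLast? = some a) : compress (A ++ a :: B) = compress (A ++ B) := by
  rw [compress_append_cons, compress_append_singleton_of_getLast A a h]
  cases B with
  | nil => simp
  | cons b B' =>
    rw [compress_append_cons]
    by_cases hab : a = b
    · rw [compress_append_singleton_of_getLast A b (hab ▸ h)]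
      have : compress (a :: b :: B') = compress (b :: B') := by
        rw [compress_cons_cons, if_pos hab]
      rw [this]
    · obtain ⟨t, ht⟩ := compress_cons_exists b B'
      rw [compress_append_singleton_of_ne A b (by rw [h]; simpa using hab)]
      have : compress (a :: b :: B') = a :: compress (b :: B') := by
        rw [compress_cons_cons, if_neg hab]
      rw [this, ht]
      simp

theorem compress_chain' {R : V → V → Prop} :
    ∀ l : List V, l.IsChain (fun a b => a = b ∨ R a b) → (compress l).IsChain R
  | [], _ => by simp
  | [_], _ => by simp
  | a :: b :: t, hc => by
    rw [List.isChain_cons_cons] at hc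
    have ih := compress_chain' (b :: t) hc.2
    rw [compress_cons_cons]
    split
    · exact ih
    · next h =>
      obtain ⟨t', ht'⟩ := compress_cons_exists b t
      rw [ht'] at ih ⊢
      exact List.isChain_cons_cons.2 ⟨hc.1.resolve_left h, ih⟩

theorem compress_reverse : ∀ l : List V, compress l.reverse = (compress l).reverse
  | [] => rfl
  | [_] => rfl
  | a :: b :: t => by
    have ih := compress_reverse (b :: t)
    have hlast : (b :: t).reverse.getLast? = some b := by
      rw [List.getLast?_reverse]; rfl
    rw [List.reverse_cons, compress_cons_cons]
    split
    · next h =>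
      subst h
      rw [compress_append_singleton_of_getLast _ _ hlast, ih]
    · next h =>
      rw [compress_append_singleton_of_ne _ _ (by rw [hlast]; simpa using Ne.symm h), ih,
        ← List.reverse_cons]

end Compress
section ReverseP

variable {V : Type*} {G : SimpleGraph V} {x : V}

theorem ReduceStep.rev {l r : List V} (h : ReduceStep l r) :
    ReduceStep l.reverse r.reverse := by
  obtain ⟨p, s, u, v, rfl, rfl⟩ := h
  exact ⟨s.reverse, p.reverse, u, v, by simp, by simp⟩

theorem rtg_rev {l r : List V} (h : Relation.ReflTransGen ReduceStep l r) :
    Relation.ReflTransGen ReduceStep l.reverse r.reverse := by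
  induction h with
  | refl => exact .refl
  | tail _ h ih => exact ih.tail h.rev

theorem IsReduced.rev {l : List V} (h : IsReduced l) : IsReduced l.reverse := by
  intro r hr
  have := hr.rev
  rw [List.reverse_reverse] at this
  exact h _ this

theorem reduce_reverse (l : List V) : reduce l.reverse = (reduce l).reverse :=
  reduce_eq_of (rtg_rev (rtg_reduce l)) ((isReduced_reduce l).rev)

theorem palindrome_rtg (m : List V) (a : V) :
    Relation.ReflTransGen ReduceStep (m ++ [a] ++ m.reverse) ((m ++ [a]).take 1) := by
  induction m using List.reverseRecOn generalizing a with
  | nil => simp; exact Relation.ReflTransGen.refl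
  | append_singleton m' b ih =>
    have step : ReduceStep ((m' ++ [b]) ++ [a] ++ (m' ++ [b]).reverse)
        (m' ++ [b] ++ m'.reverse) := ⟨m', m'.reverse, b, a, by simp, by simp⟩
    refine .head step ?_
    have ht : ((m' ++ [b]) ++ [a]).take 1 = (m' ++ [b]).take 1 :=
      List.take_append_of_le_length (by simp)
    rw [ht]
    exact ih b

theorem head_decomp {l : List V} (h : l.head? = some x) : l = x :: l.tail := by
  cases l with
  | nil => simp at h
  | cons a t => simp at h; subst h; rfl

theorem last_decomp {l : List V} (h : l.getLast? = some x) : l = l.dropLast ++ [x] :=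
  (List.dropLast_append_getLast? x h).symm

theorem lconcat_eq {a b : List V} (h1 : a.getLast? = some x) (h2 : b.head? = some x) :
    lconcat a b = a ++ b.tail := by
  show a.dropLast ++ b = a ++ b.tail
  conv_lhs => rw [head_decomp h2]
  conv_rhs => rw [last_decomp h1]
  simp

theorem IsLoopWord.ne_nil {l : List V} (h : IsLoopWord G x l) : l ≠ [] := by
  intro hn; rw [hn] at h; simp [IsLoopWord] at h

theorem IsLoopWord.reverse {l : List V} (h : IsLoopWord G x l) :
    IsLoopWord G x l.reverse := by
  obtain ⟨hc, hh, hl⟩ := h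
  refine ⟨?_, by simpa using hl, by simpa using hh⟩
  show List.IsChain _ _
  rw [List.isChain_reverse]
  show List.IsChain (flip G.Adj) l
  have : (flip G.Adj) = G.Adj := by
    funext u v; simp [flip, SimpleGraph.adj_comm]
  rw [this]; exact hc

theorem IsLoopWord.lconcat {a b : List V} (ha : IsLoopWord G x a) (hb : IsLoopWord G x b) :
    IsLoopWord G x (lconcat a b) := by
  obtain ⟨hca, hha, hla⟩ := ha
  obtain ⟨hcb, hhb, hlb⟩ := hb
  have hbne : b ≠ [] := by intro h; rw [h] at hhb; simp at hhb
  refine ⟨?_, ?_, ?_⟩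
  · show List.IsChain _ _
    rw [show GCG.lconcat a b = a.dropLast ++ b from rfl, List.isChain_append]
    refine ⟨hca.prefix a.dropLast_prefix, hcb, ?_⟩
    intro y hy z hz
    rw [hhb] at hz
    simp only [Option.mem_def, Option.some.injEq] at hz
    subst hz
    have hca' : (a.dropLast ++ [x]).IsChain G.Adj := by
      rw [← last_decomp hla]; exact hca
    rw [List.isChain_append] at hca'
    exact hca'.2.2 y hy x (by simp)
  · rw [show GCG.lconcat a b = a.dropLast ++ b from rfl]
    cases a with
    | nil => simp at hha
    | cons a0 t =>
      simp only [List.head?_cons, Option.some.injEq] at hha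
      subst hha
      cases t with
      | nil => simpa using hhb
      | cons a1 t' => simp
  · rw [show GCG.lconcat a b = a.dropLast ++ b from rfl, List.getLast?_append, hlb]
    simp

theorem IsLoopWord.singleton : IsLoopWord G x [x] := ⟨List.isChain_singleton x, rfl, rfl⟩

theorem IsReduced.singleton (a : V) : IsReduced [a] := by
  intro r hr
  have := hr.length_eq
  simp at this

end ReverseP
section Subdiv

variable {V S : Type*} {G : SimpleGraph V} {d : ℕ} {Gs : SimpleGraph (V ⊕ S)}
variable {P : G.Dart → Fin (d + 1) → V ⊕ S}

/-- Bundled even subdivision data. -/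
structure SubdivData (G : SimpleGraph V) (d : ℕ) (Gs : SimpleGraph (V ⊕ S))
    (P : G.Dart → Fin (d + 1) → V ⊕ S) : Prop where
  h0 : ∀ e, P e 0 = Sum.inl e.toProd.1
  hlast : ∀ e, P e (Fin.last d) = Sum.inl e.toProd.2
  hint : ∀ e (i : Fin (d + 1)), 0 < i.val → i.val < d → ∃ s : S, P e i = Sum.inr s
  hinj : ∀ e, Function.Injective (P e)
  hsymm : ∀ e (i : Fin (d + 1)), P e.symm i = P e i.rev
  hsurj : ∀ s : S, ∃ e i, P e i = Sum.inr s
  huniq : ∀ e e' (i i' : Fin (d + 1)), 0 < i.val → i.val < d → P e i = P e' i' →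
      (e' = e ∧ i' = i) ∨ (e' = e.symm ∧ i' = i.rev)
  hadj : ∀ a b, Gs.Adj a b ↔ ∃ e, ∃ i : Fin d, P e i.castSucc = a ∧ P e i.succ = b
  hd : 2 ≤ d

namespace SubdivData

variable (hs : SubdivData G d Gs P)
include hs

theorem pos_of_inl {e : G.Dart} {j : Fin (d + 1)} {c : V} (h : P e j = Sum.inl c) :
    (j.val = 0 ∧ c = e.toProd.1) ∨ (j.val = d ∧ c = e.toProd.2) := by
  rcases Nat.lt_or_ge 0 j.val with h0 | h0
  · rcases Nat.lt_or_ge j.val d with h1 | h1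
    · obtain ⟨s, hsv⟩ := hs.hint e j h0 h1
      rw [hsv] at h; simp at h
    · right
      have hj : j = Fin.last d := by
        apply Fin.ext
        have := j.isLt
        simp only [Fin.val_last]
        omega
      rw [hj, hs.hlast] at h
      exact ⟨by rw [hj]; simp, by simpa using h.symm⟩
  · left
    have hj : j = 0 := by
      apply Fin.ext
      simp only [Fin.val_zero]
      omega
    rw [hj, hs.h0] at h
    exact ⟨by rw [hj]; rfl, by simpa using h.symm⟩

theorem interior_of_inr {e : G.Dart} {j : Fin (d + 1)} {s : S} (h : P e j = Sum.inr s) :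
    0 < j.val ∧ j.val < d := by
  have hj := j.isLt
  rcases Nat.eq_zero_or_pos j.val with h0 | h0
  · have : j = 0 := Fin.ext h0
    rw [this, hs.h0] at h; simp at h
  rcases Nat.lt_or_ge j.val d with h1 | h1
  · exact ⟨h0, h1⟩
  · have hjeq : j = Fin.last d := by
      apply Fin.ext
      simp only [Fin.val_last]
      omega
    rw [hjeq, hs.hlast] at h; simp at h

theorem nbr {e : G.Dart} {i : Fin (d + 1)} (h0 : 0 < i.val) (h1 : i.val < d)
    {z : V ⊕ S} (hadj : Gs.Adj (P e i) z) :
    z = P e ⟨i.val - 1, by omega⟩ ∨ z = P e ⟨i.val + 1, by omega⟩ := by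
  obtain ⟨e', j, hj1, hj2⟩ := (hs.hadj _ _).1 hadj
  rcases hs.huniq e e' i j.castSucc h0 h1 hj1.symm with ⟨rfl, hji⟩ | ⟨he, hji⟩
  · right
    rw [← hj2]
    congr 1
    apply Fin.ext
    simp only [Fin.val_succ]
    have : j.castSucc.val = i.val := by rw [hji]
    simpa using this
  · left
    rw [← hj2, he, hs.hsymm]
    congr 1
    apply Fin.ext
    have hcv : j.castSucc.val = i.rev.val := by rw [hji]
    simp only [Fin.coe_castSucc] at hcv
    simp only [Fin.val_rev] at hcv ⊢
    simp only [Fin.val_succ]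
    omega

theorem seg (m : List (V ⊕ S)) : ∀ (e : G.Dart) (i : Fin (d + 1)) {c : V},
    0 < i.val → i.val < d →
    List.IsChain Gs.Adj (P e i :: m ++ [Sum.inl c]) →
    (∀ z ∈ m, ∃ s, z = Sum.inr s) →
    c = e.toProd.1 ∨ c = e.toProd.2 := by
  induction m with
  | nil =>
    intro e i c h0 h1 hc _
    have hadj : Gs.Adj (P e i) (Sum.inl c) := by simpa using hc
    rcases hs.nbr h0 h1 hadj with h | h <;>
      rcases hs.pos_of_inl h.symm with ⟨-, hc'⟩ | ⟨-, hc'⟩ <;> [exact Or.inl hc';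
        exact Or.inr hc'; exact Or.inl hc'; exact Or.inr hc']
  | cons z m' ih =>
    intro e i c h0 h1 hc hm
    obtain ⟨s, rfl⟩ := hm z (by simp)
    simp only [List.cons_append, List.isChain_cons_cons] at hc
    rcases hs.nbr h0 h1 hc.1 with h | h
    · have hint := hs.interior_of_inr (e := e) (j := ⟨i.val - 1, by omega⟩) h.symm
      refine ih e ⟨i.val - 1, by omega⟩ hint.1 hint.2 ?_ ?_
      · rw [← h]; exact hc.2
      · intro z hz; exact hm z (by simp [hz])
    · have hint := hs.interior_of_inr (e := e) (j := ⟨i.val + 1, by omega⟩) h.symm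
      refine ih e ⟨i.val + 1, by omega⟩ hint.1 hint.2 ?_ ?_
      · rw [← h]; exact hc.2
      · intro z hz; exact hm z (by simp [hz])

theorem no_inl_adj {a b : V} (h : Gs.Adj (Sum.inl a) (Sum.inl b)) : False := by
  obtain ⟨e, j, hj1, hj2⟩ := (hs.hadj _ _).1 h
  have hjl := j.isLt
  have hd2 := hs.hd
  rcases hs.pos_of_inl hj1 with ⟨hv, -⟩ | ⟨hv, -⟩ <;>
    rcases hs.pos_of_inl hj2 with ⟨hv', -⟩ | ⟨hv', -⟩ <;>
    simp only [Fin.coe_castSucc, Fin.val_succ] at hv hv' <;> omega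

theorem seg2 {a b : V} (m : List (V ⊕ S))
    (hc : List.IsChain Gs.Adj (Sum.inl a :: m ++ [Sum.inl b]))
    (hm : ∀ z ∈ m, ∃ s, z = Sum.inr s) :
    a = b ∨ G.Adj a b := by
  cases m with
  | nil =>
    exfalso
    have hadj : Gs.Adj (Sum.inl a) (Sum.inl b) := by simpa using hc
    exact hs.no_inl_adj hadj
  | cons z m' =>
    obtain ⟨s, rfl⟩ := hm z (by simp)
    obtain ⟨e, i, hei⟩ := hs.hsurj s
    have hint := hs.interior_of_inr hei
    simp only [List.cons_append, List.isChain_cons_cons] at hc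
    have hadj1 : Gs.Adj (P e i) (Sum.inl a) := by rw [hei]; exact hc.1.symm
    have ha : a = e.toProd.1 ∨ a = e.toProd.2 := by
      rcases hs.nbr hint.1 hint.2 hadj1 with h | h <;>
        rcases hs.pos_of_inl h.symm with ⟨-, hc'⟩ | ⟨-, hc'⟩ <;>
        [exact Or.inl hc'; exact Or.inr hc'; exact Or.inl hc'; exact Or.inr hc']
    have hb : b = e.toProd.1 ∨ b = e.toProd.2 := by
      refine hs.seg m' e i hint.1 hint.2 ?_ fun z hz => hm z (by simp [hz])
      rw [hei]; exact hc.2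
    have hadj := e.adj
    rcases ha with rfl | rfl <;> rcases hb with h | h <;> rw [h] <;>
      first
        | exact Or.inl rfl
        | exact Or.inr hadj
        | exact Or.inr hadj.symm

end SubdivData

end Subdiv
section DRCLemmas

variable {V' V S : Type*}

theorem split_last_some {α β : Type*} (g : α → Option β) (p : List α)
    (h : p.filterMap g ≠ []) :
    ∃ p0 q p1 c, p = p0 ++ q :: p1 ∧ g q = some c ∧ p1.filterMap g = [] ∧
      p.filterMap g = p0.filterMap g ++ [c] := by
  induction p using List.reverseRecOn with
  | nil => simp at h
  | append_singleton p' a ih =>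
    cases hga : g a with
    | some c =>
      exact ⟨p', a, [], c, by simp, hga, by simp, by simp [List.filterMap_append, hga]⟩
    | none =>
      have hfp : (p' ++ [a]).filterMap g = p'.filterMap g := by
        simp [List.filterMap_append, hga]
      rw [hfp] at h
      obtain ⟨p0, q, p1, c, heq, hq, hp1, hfil⟩ := ih h
      exact ⟨p0, q, p1 ++ [a], c, by rw [heq]; simp, hq,
        by simp [List.filterMap_append, hp1, hga], by rw [hfp, hfil]⟩

theorem split_first_some {α β : Type*} (g : α → Option β) (p : List α)
    (h : p.filterMap g ≠ []) :
    ∃ p0 q p1 c, p = p0 ++ q :: p1 ∧ g q = some c ∧ p0.filterMap g = [] ∧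
      p.filterMap g = c :: p1.filterMap g := by
  induction p with
  | nil => simp at h
  | cons a p' ih =>
    cases hga : g a with
    | some c =>
      exact ⟨[], a, p', c, rfl, hga, rfl, by simp [List.filterMap_cons, hga]⟩
    | none =>
      have hfp : (a :: p').filterMap g = p'.filterMap g := by simp [List.filterMap_cons, hga]
      rw [hfp] at h
      obtain ⟨p0, q, p1, c, heq, hq, hp0, hfil⟩ := ih h
      exact ⟨a :: p0, q, p1, c, by rw [heq]; rfl, hq,
        by simp [List.filterMap_cons, hga, hp0], by rw [hfp, hfil]⟩

theorem compress_mid_step {A B : List V} {c β : V} (hA : A.getLast? = some c)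
    (hB : B.head? = some c) (hne : c ≠ β) :
    ReduceStep (compress (A ++ β :: B)) (compress (A ++ B)) := by
  have hBd := head_decomp hB
  have h1 : compress (A ++ β :: B) = compress A ++ [β] ++ compress B := by
    rw [compress_append_cons, compress_append_singleton_of_ne A β
      (by rw [hA]; simpa using hne)]
    conv_lhs => rw [hBd]
    rw [show compress (β :: c :: B.tail) = β :: compress (c :: B.tail) from by
      rw [compress_cons_cons, if_neg (Ne.symm hne)]]
    rw [← hBd]
    obtain ⟨t, ht⟩ : ∃ t, compress B = c :: t := by
      cases hk : compress B with
      | nil => have := compress_head? B; rw [hk, hB] at this; simp at this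
      | cons k t =>
        have := compress_head? B; rw [hk, hB] at this
        simp only [List.head?_cons, Option.some.injEq] at this
        exact ⟨t, by rw [this]⟩
    rw [ht]
    simp
  have h2 : compress (A ++ B) = compress A ++ (compress B).tail := by
    conv_lhs => rw [hBd]
    rw [compress_append_cons, compress_append_singleton_of_getLast A c hA, ← hBd]
  rw [h1, h2]
  have hcA : (compress A).getLast? = some c := by rw [compress_getLast?]; exact hA
  have hcB : (compress B).head? = some c := by rw [compress_head?]; exact hB
  have hAd := last_decomp hcA
  have hBd' := head_decomp hcB
  refine ⟨(compress A).dropLast, (compress B).tail, c, β, ?_, ?_⟩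
  · conv_lhs => rw [hAd, hBd']
    simp
  · conv_lhs => rw [hAd]
    try simp

variable {G' : SimpleGraph V'} {G : SimpleGraph V} {d : ℕ}
  {Gs : SimpleGraph (V ⊕ S)} {P : G.Dart → Fin (d + 1) → V ⊕ S}
  {f : V' → V ⊕ S} {x' : V'} {x : V}

theorem split_first_inl (t : List (V ⊕ S)) :
    (∀ z ∈ t, ∃ s, z = Sum.inr s) ∨
      ∃ m b rest', t = m ++ Sum.inl b :: rest' ∧ ∀ z ∈ m, ∃ s, z = Sum.inr s := by
  induction t with
  | nil => exact Or.inl (by simp)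
  | cons z t' ih =>
    cases z with
    | inl b => exact Or.inr ⟨[], b, t', rfl, by simp⟩
    | inr s =>
      rcases ih with h | ⟨m, b, rest', rfl, hm⟩
      · left
        intro z hz
        rcases List.mem_cons.1 hz with rfl | hz'
        · exact ⟨s, rfl⟩
        · exact h z hz'
      · right
        refine ⟨Sum.inr s :: m, b, rest', rfl, ?_⟩
        intro z hz
        rcases List.mem_cons.1 hz with rfl | hz'
        · exact ⟨s, rfl⟩
        · exact hm z hz'

theorem chain'_filterMap_getLeft (hs : SubdivData G d Gs P) :
    ∀ (n : ℕ) (ws : List (V ⊕ S)), ws.length ≤ n → ws.IsChain Gs.Adj →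
      (ws.filterMap Sum.getLeft?).IsChain (fun a b => a = b ∨ G.Adj a b) := by
  intro n
  induction n using Nat.strong_induction_on with
  | _ n ih =>
    intro ws hlen hc
    match ws, hlen with
    | [], _ => simp
    | Sum.inr s :: t, hlen =>
      have heq : (Sum.inr s :: t).filterMap Sum.getLeft? = t.filterMap Sum.getLeft? := by
        simp [List.filterMap_cons, Sum.getLeft?]
      rw [heq]
      simp only [List.length_cons] at hlen
      exact ih t.length (by omega) t le_rfl hc.tail
    | Sum.inl a :: t, hlen =>
      simp only [List.length_cons] at hlen
      rcases split_first_inl t with hall | ⟨m, b, rest', rfl, hm⟩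
      · have heq : (Sum.inl a :: t).filterMap Sum.getLeft? = [a] := by
          simp only [List.filterMap_cons, Sum.getLeft?]
          rw [List.filterMap_eq_nil_iff.2]
          intro z hz
          obtain ⟨s, rfl⟩ := hall z hz
          rfl
        rw [heq]; simp
      · have hmnil : m.filterMap Sum.getLeft? = [] := by
          rw [List.filterMap_eq_nil_iff]
          intro z hz
          obtain ⟨s, rfl⟩ := hm z hz
          rfl
        have heq : (Sum.inl a :: (m ++ Sum.inl b :: rest')).filterMap Sum.getLeft?
            = a :: (Sum.inl b :: rest').filterMap Sum.getLeft? := by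
          simp [List.filterMap_cons, List.filterMap_append, hmnil, Sum.getLeft?]
        rw [heq]
        have hsuf : (Sum.inl b :: rest').IsChain Gs.Adj :=
          hc.suffix ⟨Sum.inl a :: m, by simp⟩
        have hrec := ih (Sum.inl b :: rest').length
          (by simp only [List.length_cons, List.length_append] at hlen ⊢; omega)
          _ le_rfl hsuf
        refine List.isChain_cons.2 ⟨?_, hrec⟩
        intro y hy
        have hyb : b = y := by
          have : (Sum.inl b :: rest').filterMap Sum.getLeft?
              = b :: rest'.filterMap Sum.getLeft? := by
            simp [List.filterMap_cons, Sum.getLeft?]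
          rw [this] at hy
          simpa using hy
        subst hyb

        refine hs.seg2 m ?_ hm
        refine hc.prefix ⟨rest', ?_⟩
        simp

end DRCLemmas
section DRCMain

variable {V' V S : Type*}
variable {G' : SimpleGraph V'} {G : SimpleGraph V} {d : ℕ}
  {Gs : SimpleGraph (V ⊕ S)} {P : G.Dart → Fin (d + 1) → V ⊕ S}
  {f : V' → V ⊕ S} {x' : V'} {x : V}

theorem F_head (hfx : f x' = Sum.inl x) {w : List V'} (hw : w.head? = some x') :
    (w.filterMap fun v => (f v).getLeft?).head? = some x := by
  conv_lhs => rw [head_decomp hw]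
  simp [List.filterMap_cons, hfx]

theorem F_last (hfx : f x' = Sum.inl x) {w : List V'} (hw : w.getLast? = some x') :
    (w.filterMap fun v => (f v).getLeft?).getLast? = some x := by
  conv_lhs => rw [last_decomp hw]
  simp [List.filterMap_append, hfx]

theorem DRC_loopWord (hs : SubdivData G d Gs P)
    (hf : ∀ ⦃u v⦄, G'.Adj u v → Gs.Adj (f u) (f v)) (hfx : f x' = Sum.inl x)
    {w : List V'} (hw : IsLoopWord G' x' w) : IsLoopWord G x (DRC f w) := by
  obtain ⟨hc, hh, hl⟩ := hw
  refine ⟨?_, ?_, ?_⟩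
  · apply compress_chain'
    have hmap : (w.map f).IsChain Gs.Adj := List.isChain_map_of_isChain f (fun _ _ h => hf h) hc
    have := chain'_filterMap_getLeft hs (w.map f).length (w.map f) le_rfl hmap
    rw [List.filterMap_map] at this
    exact this
  · rw [DRC, compress_head?]; exact F_head hfx hh
  · rw [DRC, compress_getLast?]; exact F_last hfx hl

theorem DRC_head (hfx : f x' = Sum.inl x) {w : List V'} (hw : w.head? = some x') :
    (DRC f w).head? = some x := by
  rw [DRC, compress_head?]; exact F_head hfx hw

theorem DRC_last (hfx : f x' = Sum.inl x) {w : List V'} (hw : w.getLast? = some x') :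
    (DRC f w).getLast? = some x := by
  rw [DRC, compress_getLast?]; exact F_last hfx hw

theorem DRC_lconcat (hfx : f x' = Sum.inl x) {a b : List V'}
    (hla : a.getLast? = some x') (hhb : b.head? = some x') :
    DRC f (lconcat a b) = lconcat (DRC f a) (DRC f b) := by
  set g : V' → Option V := fun v => (f v).getLeft? with hg
  have hFb : b.filterMap g = x :: b.tail.filterMap g := by
    conv_lhs => rw [head_decomp hhb]
    simp [List.filterMap_cons, hg, hfx]
  have hFa : a.filterMap g = a.dropLast.filterMap g ++ [x] := by
    conv_lhs => rw [last_decomp hla]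
    simp [List.filterMap_append, hg, hfx]
  have hL : DRC f (lconcat a b)
      = compress (a.dropLast.filterMap g ++ x :: b.tail.filterMap g) := by
    show compress ((a.dropLast ++ b).filterMap g) = _
    rw [List.filterMap_append, hFb]
  rw [hL, compress_append_cons]
  have h1 : compress (a.dropLast.filterMap g ++ [x]) = DRC f a := by
    show _ = compress (a.filterMap g)
    rw [hFa]
  have h2 : compress (x :: b.tail.filterMap g) = DRC f b := by
    show _ = compress (b.filterMap g)
    rw [hFb]
  rw [h1, h2]
  have hA : (DRC f a).getLast? = some x := DRC_last hfx hla
  have hB : (DRC f b).head? = some x := DRC_head hfx hhb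
  rw [lconcat_eq hA hB]

theorem DRC_reverse (w : List V') : DRC f w.reverse = (DRC f w).reverse := by
  show compress _ = (compress _).reverse
  rw [List.filterMap_reverse, compress_reverse]

theorem endpoint_cases (hs : SubdivData G d Gs P) {e : G.Dart} {i : Fin (d + 1)}
    (h0 : 0 < i.val) (h1 : i.val < d) {b : V} (hadj : Gs.Adj (P e i) (Sum.inl b)) :
    b = e.toProd.1 ∨ b = e.toProd.2 := by
  rcases hs.nbr h0 h1 hadj with h | h <;>
    rcases hs.pos_of_inl h.symm with ⟨-, hc'⟩ | ⟨-, hc'⟩ <;>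
    [exact Or.inl hc'; exact Or.inr hc'; exact Or.inl hc'; exact Or.inr hc']

theorem DRC_step (hs : SubdivData G d Gs P)
    (hf : ∀ ⦃u v⦄, G'.Adj u v → Gs.Adj (f u) (f v)) (hfx : f x' = Sum.inl x)
    {w w' : List V'} (hw : IsLoopWord G' x' w) (hstep : ReduceStep w w') :
    Relation.ReflTransGen ReduceStep (DRC f w) (DRC f w') := by
  obtain ⟨p, s, u, v, rfl, rfl⟩ := hstep
  obtain ⟨hc, hh, hl⟩ := hw
  set g : V' → Option V := fun y => (f y).getLeft? with hg
  have hadjuv : G'.Adj u v := by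
    have : List.IsChain G'.Adj [u, v] := hc.infix ⟨p, [u] ++ s, by simp⟩
    exact List.isChain_pair.1 this
  show Relation.ReflTransGen ReduceStep (compress _) (compress _)
  cases hfu : f u with
  | inl a =>
    cases hfv : f v with
    | inl b =>
      exfalso
      have := hf hadjuv
      rw [hfu, hfv] at this
      exact hs.no_inl_adj this
    | inr s0 =>
      have hL : (p ++ [u, v, u] ++ s).filterMap g
          = (p.filterMap g ++ [a]) ++ a :: s.filterMap g := by
        simp [List.filterMap_append, List.filterMap_cons, hg, hfu, hfv]
      have hR : (p ++ [u] ++ s).filterMap g = (p.filterMap g ++ [a]) ++ s.filterMap g := by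
        simp [List.filterMap_append, List.filterMap_cons, hg, hfu]
      rw [hL, hR, compress_append_dup _ a _ (by simp)]
  | inr s0 =>
    cases hfv : f v with
    | inr s1 =>
      have hL : (p ++ [u, v, u] ++ s).filterMap g = p.filterMap g ++ s.filterMap g := by
        simp [List.filterMap_append, List.filterMap_cons, hg, hfu, hfv]
      have hR : (p ++ [u] ++ s).filterMap g = p.filterMap g ++ s.filterMap g := by
        simp [List.filterMap_append, List.filterMap_cons, hg, hfu]
      rw [hL, hR]
    | inl b =>
      -- the interesting case
      have hFpne : p.filterMap g ≠ [] := by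
        cases p with
        | nil =>
          exfalso
          have hux : u = x' := by simpa using hh
          rw [hux, hfx] at hfu
          simp at hfu
        | cons p₀ pt =>
          have hp₀ : p₀ = x' := by simpa using hh
          subst hp₀
          simp [List.filterMap_cons, hg, hfx]
      have hFsne : s.filterMap g ≠ [] := by
        induction s using List.reverseRecOn with
        | nil =>
          exfalso
          have hux : u = x' := by simpa using hl
          rw [hux, hfx] at hfu
          simp at hfu
        | append_singleton st sl _ =>
          have hgl : (p ++ [u, v, u] ++ (st ++ [sl])).getLast? = some sl := by
            rw [show p ++ [u, v, u] ++ (st ++ [sl]) = (p ++ [u, v, u] ++ st) ++ [sl] by simp,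
              List.getLast?_concat]
          rw [hgl] at hl
          have hsl : sl = x' := by simpa using hl
          subst hsl
          simp [List.filterMap_append, hg, hfx]
      obtain ⟨e, i, hei⟩ := hs.hsurj s0
      have hint := hs.interior_of_inr hei
      have hadj_ub : Gs.Adj (P e i) (Sum.inl b) := by
        have := hf hadjuv
        rw [hfu, hfv] at this
        rw [hei]
        exact this
      have hb := endpoint_cases hs hint.1 hint.2 hadj_ub
      obtain ⟨p0, q, p1, c, hpdec, hgq, hp1, hFp⟩ := split_last_some g p hFpne
      obtain ⟨s1', q', s2, c', hsdec, hgq', hs1, hFs⟩ := split_first_some g s hFsne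
      have hfq : f q = Sum.inl c := by
        rcases hfqv : f q with y | y
        · simp only [hg] at hgq; rw [hfqv] at hgq
          have hyc : y = c := by simpa using hgq
          rw [hyc]
        · simp only [hg] at hgq; rw [hfqv] at hgq; simp at hgq
      have hfq' : f q' = Sum.inl c' := by
        rcases hfqv : f q' with y | y
        · simp only [hg] at hgq'; rw [hfqv] at hgq'
          have hyc : y = c' := by simpa using hgq'
          rw [hyc]
        · simp only [hg] at hgq'; rw [hfqv] at hgq'; simp at hgq'
      -- c is an endpoint
      have hallinr : ∀ y ∈ p1, ∃ sy, f y = Sum.inr sy := by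
        intro y hy
        have : g y = none := List.filterMap_eq_nil_iff.1 hp1 y hy
        rcases hfy : f y with z | z
        · simp only [hg] at this; rw [hfy] at this; simp at this
        · exact ⟨z, rfl⟩
      have hallinr' : ∀ y ∈ s1', ∃ sy, f y = Sum.inr sy := by
        intro y hy
        have : g y = none := List.filterMap_eq_nil_iff.1 hs1 y hy
        rcases hfy : f y with z | z
        · simp only [hg] at this; rw [hfy] at this; simp at this
        · exact ⟨z, rfl⟩
      have hchain_c : List.IsChain Gs.Adj (Sum.inl c :: (p1.map f ++ [P e i])) := by
        have hinf : List.IsChain G'.Adj (q :: (p1 ++ [u])) :=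
          hc.infix ⟨p0, [v, u] ++ s, by rw [hpdec]; simp⟩
        have hmap := List.isChain_map_of_isChain f (fun _ _ h => hf h) hinf
        have hform : (q :: (p1 ++ [u])).map f = Sum.inl c :: (p1.map f ++ [P e i]) := by
          simp [hfq, hfu, hei]
        rw [hform] at hmap
        exact hmap
      have hcend : c = e.toProd.1 ∨ c = e.toProd.2 := by
        refine hs.seg ((p1.map f).reverse) e i hint.1 hint.2 ?_ ?_
        · have hflip : (flip Gs.Adj) = Gs.Adj := by
            funext a b
            simp only [flip]
            rw [SimpleGraph.adj_comm]
          have hrev : List.IsChain Gs.Adj ((Sum.inl c :: (p1.map f ++ [P e i])).reverse) := by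
            rw [List.isChain_reverse]
            show List.IsChain (flip Gs.Adj) _
            rw [hflip]
            exact hchain_c
          have hre : (Sum.inl c :: (p1.map f ++ [P e i])).reverse
              = P e i :: ((p1.map f).reverse ++ [Sum.inl c]) := by simp
          rw [hre] at hrev
          exact hrev
        · intro z hz
          simp only [List.mem_reverse, List.mem_map] at hz
          obtain ⟨y, hy, rfl⟩ := hz
          obtain ⟨sy, hsy⟩ := hallinr y hy
          exact ⟨sy, by rw [hsy]⟩
      have hchain_c' : List.IsChain Gs.Adj (P e i :: (s1'.map f ++ [Sum.inl c'])) := by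
        have hinf : List.IsChain G'.Adj (u :: (s1' ++ [q'])) :=
          hc.infix ⟨p ++ [u, v], s2, by rw [hsdec]; simp⟩
        have hmap := List.isChain_map_of_isChain f (fun _ _ h => hf h) hinf
        have hform : (u :: (s1' ++ [q'])).map f = P e i :: (s1'.map f ++ [Sum.inl c']) := by
          simp [hfq', hfu, hei]
        rw [hform] at hmap
        exact hmap
      have hc'end : c' = e.toProd.1 ∨ c' = e.toProd.2 := by
        refine hs.seg (s1'.map f) e i hint.1 hint.2 hchain_c' ?_
        intro z hz
        simp only [List.mem_map] at hz
        obtain ⟨y, hy, rfl⟩ := hz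
        obtain ⟨sy, hsy⟩ := hallinr' y hy
        exact ⟨sy, by rw [hsy]⟩
      have hFw : (p ++ [u, v, u] ++ s).filterMap g
          = p.filterMap g ++ b :: (c' :: s2.filterMap g) := by
        rw [List.filterMap_append, List.filterMap_append, hFs]
        simp [List.filterMap_cons, hg, hfu, hfv]
      have hFw' : (p ++ [u] ++ s).filterMap g
          = p.filterMap g ++ (c' :: s2.filterMap g) := by
        rw [List.filterMap_append, List.filterMap_append, hFs]
        simp [List.filterMap_cons, hg, hfu]
      rw [hFw, hFw']
      by_cases hcb : c = b
      · have hlastFp : (p.filterMap g).getLast? = some b := by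
          rw [hFp, hcb]; simp
        rw [compress_append_dup _ b _ hlastFp]
      · by_cases hc'b : c' = b
        · have hre : p.filterMap g ++ b :: (c' :: s2.filterMap g)
              = (p.filterMap g ++ [b]) ++ b :: s2.filterMap g := by
            rw [hc'b]; simp
          have hre' : p.filterMap g ++ (c' :: s2.filterMap g)
              = (p.filterMap g ++ [b]) ++ s2.filterMap g := by
            rw [hc'b]; simp
          rw [hre, hre', compress_append_dup _ b _ (by simp)]
        · have hcc' : c = c' := by
            have hne := e.adj.ne
            rcases hb with rfl | rfl
            · rcases hcend with h1 | h1
              · exact absurd h1 hcb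
              · rcases hc'end with h2 | h2
                · exact absurd h2 hc'b
                · rw [h1, h2]
            · rcases hcend with h1 | h1
              · rcases hc'end with h2 | h2
                · rw [h1, h2]
                · exact absurd h2 hc'b
              · exact absurd h1 hcb
          subst hcc'
          refine Relation.ReflTransGen.single (compress_mid_step (c := c) ?_ ?_ ?_)
          · rw [hFp]; simp
          · simp
          · exact hcb
end DRCMain
section Tower

open GraphTower

theorem take_one_head {V : Type*} {x : V} {l : List V} (h : l.head? = some x) :
    l.take 1 = [x] := by
  cases l with
  | nil => simp at h
  | cons a t => simp at h; simp [h]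

theorem reduce_lconcat_right {V : Type*} (A B : List V) :
    reduce (lconcat A (reduce B)) = reduce (lconcat A B) := by
  apply (reduce_eq_reduce _).symm
  have := rtg_context A.dropLast [] (rtg_reduce B)
  simpa [lconcat] using this

theorem reduce_lconcat_left {V : Type*} {G : SimpleGraph V} {x : V} {A B : List V}
    (hA : IsLoopWord G x A) (hB : IsLoopWord G x B) :
    reduce (lconcat (reduce A) B) = reduce (lconcat A B) := by
  have hrA := reduce_loopWord hA
  rw [lconcat_eq hA.2.2 hB.2.1, lconcat_eq hrA.2.2 hB.2.1]
  apply (reduce_eq_reduce _).symm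
  have := rtg_context [] B.tail (rtg_reduce A)
  simpa using this

theorem mul_inv_single {V : Type*} {G : SimpleGraph V} {x : V} {A : List V}
    (hA : IsLoopWord G x A) : reduce (lconcat A A.reverse) = [x] := by
  obtain ⟨m, hm⟩ : ∃ m, A = m ++ [x] := ⟨A.dropLast, last_decomp hA.2.2⟩
  have hhead : (m ++ [x]).head? = some x := by rw [← hm]; exact hA.2.1
  have hform : lconcat A A.reverse = m ++ [x] ++ m.reverse := by
    rw [hm]
    show (m ++ [x]).dropLast ++ (m ++ [x]).reverse = _
    rw [List.dropLast_concat]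
    simp
  rw [hform]
  have := palindrome_rtg m x
  rw [take_one_head hhead] at this
  exact reduce_eq_of this (IsReduced.singleton x)

namespace GraphTower

variable (T : GraphTower)

theorem exists_subdivData (n : ℕ) :
    ∃ P : (T.G n).Dart → Fin (T.d n + 1) → T.V n ⊕ T.S n,
      SubdivData (T.G n) (T.d n) (T.Gs n) P := by
  obtain ⟨P, h0, hlast, hint, hinj, hsymm, hsurj, huniq, hadj⟩ := T.subdiv n
  exact ⟨P, ⟨h0, hlast, hint, hinj, hsymm, hsurj, huniq, hadj, T.two_le_d n⟩⟩

theorem phi_loopWord {n : ℕ} {w : List (T.V (n + 1))}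
    (hw : IsLoopWord (T.G (n + 1)) (T.x (n + 1)) w) :
    IsLoopWord (T.G n) (T.x n) (T.phi n w) := by
  obtain ⟨P, hs⟩ := T.exists_subdivData n
  exact DRC_loopWord hs (fun u v h => T.f_simplicial n h) (T.f_base n) hw

theorem phi_lconcat {n : ℕ} {a b : List (T.V (n + 1))}
    (hla : a.getLast? = some (T.x (n + 1))) (hhb : b.head? = some (T.x (n + 1))) :
    T.phi n (lconcat a b) = lconcat (T.phi n a) (T.phi n b) :=
  DRC_lconcat (T.f_base n) hla hhb

theorem phi_reverse {n : ℕ} (w : List (T.V (n + 1))) :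
    T.phi n w.reverse = (T.phi n w).reverse :=
  DRC_reverse w

theorem phi_rtg {n : ℕ} {w w' : List (T.V (n + 1))}
    (hw : IsLoopWord (T.G (n + 1)) (T.x (n + 1)) w)
    (h : Relation.ReflTransGen ReduceStep w w') :
    Relation.ReflTransGen ReduceStep (T.phi n w) (T.phi n w') := by
  obtain ⟨P, hs⟩ := T.exists_subdivData n
  induction h with
  | refl => exact .refl
  | @tail b c hab hbc ih =>
    have hbloop : IsLoopWord (T.G (n + 1)) (T.x (n + 1)) b := rtg_loopWord hab hw
    exact ih.trans (DRC_step hs (fun u v h => T.f_simplicial n h) (T.f_base n) hbloop hbc)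

theorem reduce_phi_reduce {n : ℕ} {w : List (T.V (n + 1))}
    (hw : IsLoopWord (T.G (n + 1)) (T.x (n + 1)) w) :
    reduce (T.phi n (reduce w)) = reduce (T.phi n w) :=
  (reduce_eq_reduce (T.phi_rtg hw (rtg_reduce w))).symm

theorem phi_singleton (n : ℕ) : T.phi n [T.x (n + 1)] = [T.x n] := by
  show compress _ = _
  simp [List.filterMap_cons, T.f_base n]

theorem proj_loopWord (n : ℕ) : ∀ (m : ℕ) (w : List (T.V (n + m))),
    IsLoopWord (T.G (n + m)) (T.x (n + m)) w →
      IsLoopWord (T.G n) (T.x n) (T.proj n m w) := by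
  intro m
  induction m with
  | zero => exact fun w hw => hw
  | succ m ih => exact fun w hw => ih _ (T.phi_loopWord hw)

theorem proj_rtg (n : ℕ) : ∀ (m : ℕ) (w w' : List (T.V (n + m))),
    IsLoopWord (T.G (n + m)) (T.x (n + m)) w →
    Relation.ReflTransGen ReduceStep w w' →
      Relation.ReflTransGen ReduceStep (T.proj n m w) (T.proj n m w') := by
  intro m
  induction m with
  | zero => exact fun w w' _ h => h
  | succ m ih => exact fun w w' hw h => ih _ _ (T.phi_loopWord hw) (T.phi_rtg hw h)

theorem proj_lconcat (n : ℕ) : ∀ (m : ℕ) (a b : List (T.V (n + m))),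
    IsLoopWord (T.G (n + m)) (T.x (n + m)) a →
    IsLoopWord (T.G (n + m)) (T.x (n + m)) b →
      T.proj n m (lconcat a b) = lconcat (T.proj n m a) (T.proj n m b) := by
  intro m
  induction m with
  | zero => exact fun a b _ _ => rfl
  | succ m ih =>
    intro a b ha hb
    have h1 : T.phi (n + m) (lconcat a b) = lconcat (T.phi (n + m) a) (T.phi (n + m) b) :=
      T.phi_lconcat ha.2.2 hb.2.1
    show T.proj n m (T.phi (n + m) (lconcat a b)) = _
    rw [h1]
    exact ih _ _ (T.phi_loopWord ha) (T.phi_loopWord hb)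

theorem proj_reverse (n : ℕ) : ∀ (m : ℕ) (w : List (T.V (n + m))),
    T.proj n m w.reverse = (T.proj n m w).reverse := by
  intro m
  induction m with
  | zero => exact fun w => rfl
  | succ m ih =>
    intro w
    show T.proj n m (T.phi (n + m) w.reverse) = _
    rw [T.phi_reverse]
    exact ih _

theorem proj_singleton (n : ℕ) : ∀ m : ℕ, T.proj n m [T.x (n + m)] = [T.x n] := by
  intro m
  induction m with
  | zero => rfl
  | succ m ih =>
    show T.proj n m (T.phi (n + m) [T.x (n + m + 1)]) = _
    rw [T.phi_singleton]
    exact ih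

end GraphTower

end Tower
section Main

theorem rtg_chain_mono {α : Type*} {u : ℕ → List α}
    (hstep : ∀ m, Relation.ReflTransGen ReduceStep (u (m + 1)) (u m)) :
    ∀ {m m' : ℕ}, m ≤ m' → Relation.ReflTransGen ReduceStep (u m') (u m) := by
  intro m m' hle
  induction hle with
  | refl => exact .refl
  | step h ih => exact (hstep _).trans ih

namespace GraphTower

variable (T : GraphTower)

theorem memG_one : T.MemG T.seqOne := by
  refine ⟨fun n => ⟨IsLoopWord.singleton, IsReduced.singleton _⟩, fun n => ?_⟩
  show reduce (T.phi n [T.x (n + 1)]) = [T.x n]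
  rw [T.phi_singleton, (IsReduced.singleton _).reduce_eq]

theorem memG_mul {g h} (hg : T.MemG g) (hh : T.MemG h) : T.MemG (T.seqMul g h) := by
  refine ⟨fun n => ⟨reduce_loopWord ((hg.1 n).1.lconcat (hh.1 n).1), isReduced_reduce _⟩,
    fun n => ?_⟩
  show reduce (T.phi n (reduce (lconcat (g (n + 1)) (h (n + 1)))))
      = reduce (lconcat (g n) (h n))
  rw [T.reduce_phi_reduce ((hg.1 (n + 1)).1.lconcat (hh.1 (n + 1)).1)]
  have h1 : T.phi n (lconcat (g (n + 1)) (h (n + 1)))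
      = lconcat (T.phi n (g (n + 1))) (T.phi n (h (n + 1))) :=
    T.phi_lconcat (hg.1 (n + 1)).1.2.2 (hh.1 (n + 1)).1.2.1
  rw [h1]
  have hpg := T.phi_loopWord (hg.1 (n + 1)).1
  have hph := T.phi_loopWord (hh.1 (n + 1)).1
  calc reduce (lconcat (T.phi n (g (n + 1))) (T.phi n (h (n + 1))))
      = reduce (lconcat (reduce (T.phi n (g (n + 1)))) (T.phi n (h (n + 1)))) :=
        (reduce_lconcat_left hpg hph).symm
    _ = reduce (lconcat (reduce (T.phi n (g (n + 1)))) (reduce (T.phi n (h (n + 1))))) :=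
        (reduce_lconcat_right _ _).symm
    _ = reduce (lconcat (g n) (h n)) := by rw [hg.2 n, hh.2 n]

theorem memG_inv {g} (hg : T.MemG g) : T.MemG (T.seqInv g) := by
  refine ⟨fun n => ⟨(hg.1 n).1.reverse, (hg.1 n).2.rev⟩, fun n => ?_⟩
  show reduce (T.phi n ((g (n + 1)).reverse)) = (g n).reverse
  rw [T.phi_reverse, reduce_reverse, hg.2 n]

theorem seq_assoc {g h k} (hg : T.MemG g) (hh : T.MemG h) (hk : T.MemG k) :
    T.seqMul (T.seqMul g h) k = T.seqMul g (T.seqMul h k) := by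
  funext n
  have hA := (hg.1 n).1
  have hB := (hh.1 n).1
  have hC := (hk.1 n).1
  show reduce (lconcat (reduce (lconcat (g n) (h n))) (k n))
      = reduce (lconcat (g n) (reduce (lconcat (h n) (k n))))
  rw [reduce_lconcat_left (hA.lconcat hB) hC, reduce_lconcat_right]
  congr 1
  show ((g n).dropLast ++ h n).dropLast ++ k n = (g n).dropLast ++ ((h n).dropLast ++ k n)
  rw [List.dropLast_append_of_ne_nil hB.ne_nil, List.append_assoc]

theorem one_mul' {g} (hg : T.MemG g) : T.seqMul T.seqOne g = g := by
  funext n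
  show reduce (lconcat [T.x n] (g n)) = g n
  have h1 : lconcat [T.x n] (g n) = g n := by
    show [T.x n].dropLast ++ g n = g n
    simp
  rw [h1, (hg.1 n).2.reduce_eq]

theorem mul_one' {g} (hg : T.MemG g) : T.seqMul g T.seqOne = g := by
  funext n
  show reduce (lconcat (g n) [T.x n]) = g n
  have h1 : lconcat (g n) [T.x n] = g n := (last_decomp (hg.1 n).1.2.2).symm
  rw [h1, (hg.1 n).2.reduce_eq]

theorem mul_inv' {g} (hg : T.MemG g) : T.seqMul g (T.seqInv g) = T.seqOne := by
  funext n
  show reduce (lconcat (g n) ((g n).reverse)) = [T.x n]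
  exact mul_inv_single (hg.1 n).1

theorem inv_mul' {g} (hg : T.MemG g) : T.seqMul (T.seqInv g) g = T.seqOne := by
  funext n
  show reduce (lconcat ((g n).reverse) (g n)) = [T.x n]
  have := mul_inv_single ((hg.1 n).1.reverse)
  rwa [List.reverse_reverse] at this

theorem lec_one : T.LEC T.seqOne := by
  intro n
  refine ⟨0, fun m _ => ?_⟩
  show T.proj n m [T.x (n + m)] = T.proj n 0 [T.x (n + 0)]
  rw [T.proj_singleton]
  rfl

theorem lec_inv {g} (hlec : T.LEC g) : T.LEC (T.seqInv g) := by
  intro n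
  obtain ⟨M, hM⟩ := hlec n
  refine ⟨M, fun m hm => ?_⟩
  show T.proj n m ((g (n + m)).reverse) = T.proj n M ((g (n + M)).reverse)
  rw [T.proj_reverse, T.proj_reverse, hM m hm]

theorem lec_mul {g h} (hg : T.MemG g) (hh : T.MemG h) (hlg : T.LEC g) (hlh : T.LEC h) :
    T.LEC (T.seqMul g h) := by
  intro n
  obtain ⟨Mg, hMg⟩ := hlg n
  obtain ⟨Mh, hMh⟩ := hlh n
  have hgh := T.memG_mul hg hh
  set r : ∀ k, List (T.V k) := T.seqMul g h with hr
  set u : ℕ → List (T.V n) := fun m => T.proj n m (r (n + m)) with hu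
  have hloopr : ∀ k, IsLoopWord (T.G k) (T.x k) (r k) := fun k => (hgh.1 k).1
  have hstep : ∀ m, Relation.ReflTransGen ReduceStep (u (m + 1)) (u m) := by
    intro m
    have hcoh : reduce (T.phi (n + m) (r (n + m + 1))) = r (n + m) := hgh.2 (n + m)
    have hphi_loop : IsLoopWord (T.G (n + m)) (T.x (n + m)) (T.phi (n + m) (r (n + m + 1))) :=
      T.phi_loopWord (hloopr (n + m + 1))
    have hrtg : Relation.ReflTransGen ReduceStep (T.phi (n + m) (r (n + m + 1))) (r (n + m)) := by
      rw [← hcoh]; exact rtg_reduce _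
    exact T.proj_rtg n m _ _ hphi_loop hrtg
  set M0 := max Mg Mh with hM0
  set W : List (T.V n) := lconcat (T.proj n Mg (g (n + Mg))) (T.proj n Mh (h (n + Mh)))
    with hW
  have hWbound : ∀ m, M0 ≤ m → Relation.ReflTransGen ReduceStep W (u m) := by
    intro m hm
    have hlc : IsLoopWord (T.G (n + m)) (T.x (n + m)) (lconcat (g (n + m)) (h (n + m))) :=
      ((hg.1 (n + m)).1).lconcat ((hh.1 (n + m)).1)
    have h1 : Relation.ReflTransGen ReduceStep
        (T.proj n m (lconcat (g (n + m)) (h (n + m)))) (u m) :=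
      T.proj_rtg n m _ _ hlc (rtg_reduce _)
    have h2 : T.proj n m (lconcat (g (n + m)) (h (n + m))) = W := by
      rw [T.proj_lconcat n m _ _ (hg.1 (n + m)).1 (hh.1 (n + m)).1, hW,
        hMg m (le_trans (le_max_left _ _) hm), hMh m (le_trans (le_max_right _ _) hm)]
    rw [← h2]
    exact h1
  have hmono : ∀ {m m' : ℕ}, m ≤ m' → Relation.ReflTransGen ReduceStep (u m') (u m) :=
    rtg_chain_mono hstep
  have hbdd : ∀ m, M0 ≤ m → (u m).length ≤ W.length :=
    fun m hm => rtg_length_le (hWbound m hm)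
  set Sv : Set ℕ := Set.range (fun j => (u (M0 + j)).length) with hSv
  have hSne : Sv.Nonempty := ⟨_, ⟨0, rfl⟩⟩
  have hSbdd : BddAbove Sv := ⟨W.length, by rintro k ⟨j, rfl⟩; exact hbdd (M0 + j) (by omega)⟩
  obtain ⟨J, hJ⟩ := Nat.sSup_mem hSne hSbdd
  have hJ' : (u (M0 + J)).length = sSup Sv := hJ
  refine ⟨M0 + J, fun m hm => ?_⟩
  have hlen_le : (u m).length ≤ (u (M0 + J)).length := by
    rw [hJ']
    apply le_csSup hSbdd
    refine ⟨m - M0, ?_⟩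
    show (u (M0 + (m - M0))).length = (u m).length
    rw [show M0 + (m - M0) = m from by omega]
  have hlen_ge : (u (M0 + J)).length ≤ (u m).length := rtg_length_le (hmono hm)
  exact rtg_eq_of_length (hmono hm) (le_antisymm hlen_le hlen_ge)

end GraphTower

end Main
/-- `G = lim←(Ω'_n, φ'_n)` is a group under the componentwise
operation `(g_n)·(h_n) = ((g_n h_n)')_n`, with identity `(x_n)_n` and inversion
by termwise reversal, and the set `𝒢` of locally eventually constant sequences
is a subgroup of `G`. -/
theorem statement_8 (T : GraphTower) :
    T.MemG T.seqOne ∧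
    (∀ g h, T.MemG g → T.MemG h → T.MemG (T.seqMul g h)) ∧
    (∀ g h k, T.MemG g → T.MemG h → T.MemG k →
      T.seqMul (T.seqMul g h) k = T.seqMul g (T.seqMul h k)) ∧
    (∀ g, T.MemG g → T.seqMul T.seqOne g = g ∧ T.seqMul g T.seqOne = g) ∧
    (∀ g, T.MemG g → T.MemG (T.seqInv g) ∧
      T.seqMul g (T.seqInv g) = T.seqOne ∧ T.seqMul (T.seqInv g) g = T.seqOne) ∧
    T.LEC T.seqOne ∧
    (∀ g h, T.MemG g → T.MemG h → T.LEC g → T.LEC h → T.LEC (T.seqMul g h)) ∧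
    (∀ g, T.MemG g → T.LEC g → T.LEC (T.seqInv g)) := by
  exact ⟨T.memG_one,
    fun g h hg hh => T.memG_mul hg hh,
    fun g h k hg hh hk => T.seq_assoc hg hh hk,
    fun g hg => ⟨T.one_mul' hg, T.mul_one' hg⟩,
    fun g hg => ⟨T.memG_inv hg, T.mul_inv' hg, T.inv_mul' hg⟩,
    T.lec_one,
    fun g h hg hh hlg hlh => T.lec_mul hg hh hlg hlh,
    fun g hg hlg => T.lec_inv hlg⟩

end GCG
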